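/- Let n ∈ ℕ, A ∈ ℝ^{n×n}, B ∈ ℝⁿ, c ∈ ℝⁿ, D ∈ ℝ, and let ρ₁ ∈ ℝ, ε₂ > 0. Suppose there exists a symmetric positive-definite X ∈ ℝ^{n×n} such that the symmetric (n+1)×(n+1) block matrix with entries (1,1) = AᵀXA − X, (1,2) = AᵀXB − c/2, (2,2) = BᵀXB − D + (ε₂ − ρ₁) is negative definite. Then for every input u : ℕ → ℝ and the trajectory with x(0) = 0, x(t+1) = A x(t) + B u(t), y(t) = cᵀ x(t) + D u(t), one has Σ_{t=0}^{t_f} ( y(t) u(t) + (ρ₁ − ε₂) u(t)² ) ≥ 0 for every t_f ∈ ℕ; that is, the system is input-feedforward passive with ν_c = −ρ₁ + ε₂ (and ρ_c = 0). -/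

import Mathlib

open Matrix

/-- Quadratic form of the KYP block matrix, expanded. -/
lemma stmt7_blockq (n : ℕ) (A : Matrix (Fin n) (Fin n) ℝ) (X : Matrix (Fin n) (Fin n) ℝ)
    (B c : Fin n → ℝ) (D ρ₁ ε₂ : ℝ) (v : Fin n → ℝ) (s : ℝ) :
    (Sum.elim v (fun _ : Fin 1 => s)) ⬝ᵥ
      (Matrix.fromBlocks
        (Aᵀ * X * A - X)
        (Matrix.of fun i (_ : Fin 1) => Aᵀ.mulVec (X.mulVec B) i - c i / 2)
        (Matrix.of fun (_ : Fin 1) j => Aᵀ.mulVec (X.mulVec B) j - c j / 2)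
        (Matrix.of fun (_ _ : Fin 1) => B ⬝ᵥ X.mulVec B - D + (ε₂ - ρ₁))) *ᵥ
      (Sum.elim v (fun _ : Fin 1 => s)) =
    (v ⬝ᵥ (Aᵀ * X * A) *ᵥ v - v ⬝ᵥ X *ᵥ v)
      + 2 * (s * (v ⬝ᵥ (Aᵀ *ᵥ (X *ᵥ B)))) - s * (c ⬝ᵥ v)
      + s * s * (B ⬝ᵥ X *ᵥ B - D + (ε₂ - ρ₁)) := by
  set w : Fin n → ℝ := Aᵀ *ᵥ (X *ᵥ B) with hw
  have h12 : (Matrix.of fun i (_ : Fin 1) => w i - c i / 2) *ᵥ (fun _ : Fin 1 => s)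
      = fun i => (w i - c i / 2) * s := by
    ext i; simp [mulVec, dotProduct]
  have h21 : (Matrix.of fun (_ : Fin 1) j => w j - c j / 2) *ᵥ v
      = fun _ : Fin 1 => ∑ j, (w j - c j / 2) * v j := by
    ext i; simp [mulVec, dotProduct]
  have h22 : (Matrix.of fun (_ _ : Fin 1) => B ⬝ᵥ X.mulVec B - D + (ε₂ - ρ₁)) *ᵥ
      (fun _ : Fin 1 => s) = fun _ : Fin 1 => (B ⬝ᵥ X *ᵥ B - D + (ε₂ - ρ₁)) * s := by
    ext i; simp [mulVec, dotProduct]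
  have hcross : ∑ j, (w j - c j / 2) * v j = v ⬝ᵥ w - (c ⬝ᵥ v) / 2 := by
    rw [dotProduct, dotProduct, Finset.sum_div, ← Finset.sum_sub_distrib]
    exact Finset.sum_congr rfl fun i _ => by ring
  have hdot12 : v ⬝ᵥ (fun i => (w i - c i / 2) * s) = (v ⬝ᵥ w - (c ⬝ᵥ v) / 2) * s := by
    rw [dotProduct, dotProduct, dotProduct, Finset.sum_div, sub_mul, Finset.sum_mul,
      Finset.sum_mul, ← Finset.sum_sub_distrib]
    exact Finset.sum_congr rfl fun i _ => by ring
  rw [fromBlocks_mulVec, sumElim_dotProduct_sumElim, Sum.elim_comp_inl, Sum.elim_comp_inr,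
    h12, h21, h22, dotProduct_add, dotProduct_add, hdot12, sub_mulVec, dotProduct_sub]
  simp [dotProduct, hcross]
  ring

/-- Expansion of the storage-function quadratic form along the dynamics. -/
lemma stmt7_Vexp (n : ℕ) (A X : Matrix (Fin n) (Fin n) ℝ) (B : Fin n → ℝ)
    (hXt : Xᵀ = X) (v : Fin n → ℝ) (s : ℝ) :
    (A *ᵥ v + s • B) ⬝ᵥ X *ᵥ (A *ᵥ v + s • B)
      = v ⬝ᵥ (Aᵀ * X * A) *ᵥ v + 2 * (s * (v ⬝ᵥ (Aᵀ *ᵥ (X *ᵥ B))))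
        + s * s * (B ⬝ᵥ X *ᵥ B) := by
  have i1 : (A *ᵥ v) ⬝ᵥ (X *ᵥ (A *ᵥ v)) = v ⬝ᵥ (Aᵀ * X * A) *ᵥ v := by
    rw [← mulVec_mulVec, ← mulVec_mulVec, dotProduct_mulVec v, vecMul_transpose]
  have i2 : (A *ᵥ v) ⬝ᵥ (X *ᵥ B) = v ⬝ᵥ (Aᵀ *ᵥ (X *ᵥ B)) := by
    rw [dotProduct_mulVec v, vecMul_transpose]
  have i3 : B ⬝ᵥ (X *ᵥ (A *ᵥ v)) = v ⬝ᵥ (Aᵀ *ᵥ (X *ᵥ B)) := by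
    rw [dotProduct_mulVec B, ← hXt, vecMul_transpose, hXt, dotProduct_comm, i2]
  rw [mulVec_add, mulVec_smul, dotProduct_add, add_dotProduct, add_dotProduct,
    dotProduct_smul, smul_dotProduct, smul_dotProduct, dotProduct_smul,
    i1, i2, i3]
  simp [smul_eq_mul]; ring

/-- Case B of Theorem 2: the KYP-type LMI certifies that the state-space
system `(A, B, cᵀ, D)` is input-feedforward passive with `νc = −ρ₁ + ε₂`
(and `ρc = 0`). -/
theorem stmt7 (n : ℕ) (A : Matrix (Fin n) (Fin n) ℝ) (B c : Fin n → ℝ)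
    (D ρ₁ ε₂ : ℝ) (hε₂ : 0 < ε₂)
    (hX : ∃ X : Matrix (Fin n) (Fin n) ℝ, X.PosDef ∧
      (-(Matrix.fromBlocks
        (Aᵀ * X * A - X)
        (Matrix.of fun i (_ : Fin 1) => Aᵀ.mulVec (X.mulVec B) i - c i / 2)
        (Matrix.of fun (_ : Fin 1) j => Aᵀ.mulVec (X.mulVec B) j - c j / 2)
        (Matrix.of fun (_ _ : Fin 1) => B ⬝ᵥ X.mulVec B - D + (ε₂ - ρ₁)))).PosDef) :
    ∀ (u : ℕ → ℝ) (x : ℕ → Fin n → ℝ) (y : ℕ → ℝ),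
      x 0 = 0 →
      (∀ t, x (t + 1) = A.mulVec (x t) + u t • B) →
      (∀ t, y t = c ⬝ᵥ x t + D * u t) →
      ∀ tf : ℕ,
        0 ≤ ∑ t ∈ Finset.range (tf + 1),
          (y t * u t + (ρ₁ - ε₂) * (u t) ^ 2) := by
  obtain ⟨X, hXpd, hM⟩ := hX
  intro u x y hx0 hxs hy tf
  have hXt : Xᵀ = X := by simpa using hXpd.1.eq
  -- storage function
  set V : ℕ → ℝ := fun t => x t ⬝ᵥ X *ᵥ x t with hV
  have step : ∀ t, V (t + 1) - V t ≤ y t * u t + (ρ₁ - ε₂) * (u t) ^ 2 := by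
    intro t
    have hq : (Sum.elim (x t) (fun _ : Fin 1 => u t)) ⬝ᵥ
        (Matrix.fromBlocks
          (Aᵀ * X * A - X)
          (Matrix.of fun i (_ : Fin 1) => Aᵀ.mulVec (X.mulVec B) i - c i / 2)
          (Matrix.of fun (_ : Fin 1) j => Aᵀ.mulVec (X.mulVec B) j - c j / 2)
          (Matrix.of fun (_ _ : Fin 1) => B ⬝ᵥ X.mulVec B - D + (ε₂ - ρ₁))) *ᵥ
        (Sum.elim (x t) (fun _ : Fin 1 => u t)) ≤ 0 := by
      have := hM.posSemidef.dotProduct_mulVec_nonneg (Sum.elim (x t) (fun _ : Fin 1 => u t))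
      rw [neg_mulVec, dotProduct_neg] at this
      simpa using this
    rw [stmt7_blockq n A X B c D ρ₁ ε₂ (x t) (u t)] at hq
    have hVexp : V (t + 1) = x t ⬝ᵥ (Aᵀ * X * A) *ᵥ x t
        + 2 * (u t * (x t ⬝ᵥ (Aᵀ *ᵥ (X *ᵥ B)))) + u t * u t * (B ⬝ᵥ X *ᵥ B) := by
      rw [hV]
      simp only [hxs t]
      exact stmt7_Vexp n A X B hXt (x t) (u t)
    have hsq : (u t) ^ 2 = u t * u t := sq (u t)
    rw [hVexp, hy t, hsq, hV]
    simp only []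
    nlinarith [hq]
  have htel : V (tf + 1) - V 0 = ∑ t ∈ Finset.range (tf + 1), (V (t + 1) - V t) :=
    (Finset.sum_range_sub V (tf + 1)).symm
  have hV0 : V 0 = 0 := by simp [hV, hx0]
  have hVnn : 0 ≤ V (tf + 1) := by
    have := hXpd.posSemidef.dotProduct_mulVec_nonneg (x (tf + 1))
    simpa [hV] using this
  calc 0 ≤ V (tf + 1) - V 0 := by rw [hV0]; simpa using hVnn
    _ = ∑ t ∈ Finset.range (tf + 1), (V (t + 1) - V t) := htel
    _ ≤ ∑ t ∈ Finset.range (tf + 1), (y t * u t + (ρ₁ - ε₂) * (u t) ^ 2) :=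
        Finset.sum_le_sum fun t _ => step t
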